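/- For the closed curve of subspaces Π(t) = exp(-iπt S_y)(Π_NOT), t ∈ [0,1], the Wilczek–Zee holonomy U_geo = P F^{-1} equals the NOT gate σ_x (up to a global phase), where P is the polar part of the overlap matrix Q_{ij} = ⟨φ_i(0)|φ_j(1)⟩ and F is the path-ordered exponential of the WZ connection. -/

import Mathlib

open Matrix Complex
set_option maxHeartbeats 1000000

/-- Spin-2 raising operator on ℂ⁵ in the basis |2,2⟩,…,|2,-2⟩ (index i ↔ m = 2 - i). -/
noncomputable def Splus : Matrix (Fin 5) (Fin 5) ℂ :=
  Matrix.of fun i j =>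
    if (i : ℕ) + 1 = (j : ℕ) then ((Real.sqrt ((j : ℕ) * (5 - (j : ℕ))) : ℝ) : ℂ) else 0

noncomputable def Sminus : Matrix (Fin 5) (Fin 5) ℂ := Splus.conjTranspose

noncomputable def Sx : Matrix (Fin 5) (Fin 5) ℂ := (1 / 2 : ℂ) • (Splus + Sminus)

noncomputable def Sy : Matrix (Fin 5) (Fin 5) ℂ := (-Complex.I / 2) • (Splus - Sminus)

noncomputable def Sz : Matrix (Fin 5) (Fin 5) ℂ :=
  Matrix.diagonal fun i : Fin 5 => (2 : ℂ) - (i : ℕ)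

/-- ψ₁ = (1/√3)(1,0,0,√2,0). -/
noncomputable def ψ1 : Fin 5 → ℂ := fun i =>
  ((Real.sqrt 3)⁻¹ : ℝ) * ![1, 0, 0, ((Real.sqrt 2 : ℝ) : ℂ), 0] i

/-- ψ₂ = (1/√3)(0,-√2,0,0,1). -/
noncomputable def ψ2 : Fin 5 → ℂ := fun i =>
  ((Real.sqrt 3)⁻¹ : ℝ) * ![0, -((Real.sqrt 2 : ℝ) : ℂ), 0, 0, 1] i

/-- The curve of rotations t ↦ exp(-iπt S_y) applied to Π_NOT. -/
noncomputable def Ut (t : ℝ) : Matrix (Fin 5) (Fin 5) ℂ :=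
  NormedSpace.exp ((-Complex.I * (Real.pi : ℂ) * (t : ℂ)) • Sy)

noncomputable def ψ : Fin 2 → (Fin 5 → ℂ) := ![ψ1, ψ2]

/-- Overlap matrix Q_{ij} = ⟨ψ_i | exp(-iπ S_y) | ψ_j⟩. -/
noncomputable def Q : Matrix (Fin 2) (Fin 2) ℂ :=
  Matrix.of fun i j => star (ψ i) ⬝ᵥ (Ut 1 *ᵥ ψ j)

/-! ### Auxiliary material -/

lemma sqrt4 : Real.sqrt 4 = 2 := by
  rw [show (4:ℝ) = 2^2 by norm_num, Real.sqrt_sq (by norm_num)]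

lemma s23 : Real.sqrt 2 * Real.sqrt 3 = Real.sqrt 6 := by
  rw [← Real.sqrt_mul (by norm_num)]; norm_num

lemma s6sq : ((Real.sqrt 6:ℝ):ℂ) * ((Real.sqrt 6:ℝ):ℂ) = 6 := by
  rw [← Complex.ofReal_mul, Real.mul_self_sqrt (by norm_num)]; norm_num

lemma s6pow : ((Real.sqrt 6:ℝ):ℂ)^2 = 6 := by
  rw [sq, s6sq]

lemma s2sq : ((Real.sqrt 2:ℝ):ℂ) * ((Real.sqrt 2:ℝ):ℂ) = 2 := by
  rw [← Complex.ofReal_mul, Real.mul_self_sqrt (by norm_num)]; norm_num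

lemma s2pow : ((Real.sqrt 2:ℝ):ℂ)^2 = 2 := by rw [sq, s2sq]

lemma s3sq : ((Real.sqrt 3:ℝ):ℂ) * ((Real.sqrt 3:ℝ):ℂ) = 3 := by
  rw [← Complex.ofReal_mul, Real.mul_self_sqrt (by norm_num)]; norm_num

lemma s3pow : ((Real.sqrt 3:ℝ):ℂ)^2 = 3 := by rw [sq, s3sq]

lemma Splus_eq : Splus = !![0,2,0,0,0; 0,0,((Real.sqrt 6:ℝ):ℂ),0,0;
    0,0,0,((Real.sqrt 6:ℝ):ℂ),0; 0,0,0,0,2; 0,0,0,0,0] := by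
  ext i j
  fin_cases i <;> fin_cases j <;>
    simp [Splus, Matrix.vecHead, Matrix.vecTail] <;>
    norm_num [sqrt4, s23, show ((3:Fin 5):ℕ)=3 from rfl, show ((4:Fin 5):ℕ)=4 from rfl,
      ← Complex.ofReal_mul, mul_comm (Real.sqrt 3) (Real.sqrt 2)]

noncomputable def sy : Matrix (Fin 5) (Fin 5) ℂ :=
  !![0, -Complex.I, 0, 0, 0;
     Complex.I, 0, -Complex.I*((Real.sqrt 6:ℝ):ℂ)/2, 0, 0;
     0, Complex.I*((Real.sqrt 6:ℝ):ℂ)/2, 0, -Complex.I*((Real.sqrt 6:ℝ):ℂ)/2, 0;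
     0, 0, Complex.I*((Real.sqrt 6:ℝ):ℂ)/2, 0, -Complex.I;
     0, 0, 0, Complex.I, 0]

lemma Sy_eq : Sy = sy := by
  rw [Sy, Sminus, Splus_eq]
  ext i j
  fin_cases i <;> fin_cases j <;>
    simp [sy, Matrix.conjTranspose_apply, Matrix.vecHead, Matrix.vecTail] <;> ring

lemma SyH : Syᴴ = Sy := by
  rw [Sy_eq]
  ext i j
  fin_cases i <;> fin_cases j <;>
    simp [sy, Matrix.conjTranspose_apply, Matrix.vecHead, Matrix.vecTail]

noncomputable def R : Matrix (Fin 5) (Fin 5) ℂ := (1/4 : ℂ) •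
  !![-1, 2, -((Real.sqrt 6:ℝ):ℂ), 2, -1;
     -2*Complex.I, 2*Complex.I, 0, -2*Complex.I, 2*Complex.I;
     ((Real.sqrt 6:ℝ):ℂ), 0, -2, 0, ((Real.sqrt 6:ℝ):ℂ);
     2*Complex.I, 2*Complex.I, 0, -2*Complex.I, -2*Complex.I;
     -1, -2, -((Real.sqrt 6:ℝ):ℂ), -2, -1]

lemma hRR : Rᴴ * R = 1 := by
  ext i j
  fin_cases i <;> fin_cases j <;>
    simp only [R, Matrix.mul_apply, Fin.sum_univ_five, Matrix.conjTranspose_apply,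
      Matrix.smul_apply, Matrix.cons_val', Matrix.cons_val_zero, Matrix.cons_val_one,
      Matrix.head_cons, Matrix.head_fin_const, Matrix.empty_val', Matrix.cons_val_fin_one,
      Matrix.of_apply, Matrix.cons_val_two, Matrix.cons_val_three, Matrix.cons_val_four, Matrix.cons_val,
      Matrix.one_apply, Function.comp,
      star_mul', map_neg, _root_.map_mul, _root_.map_one, Complex.conj_ofNat, smul_eq_mul,
      Complex.star_def, Complex.conj_I, Complex.conj_ofReal, map_div₀] <;>
    norm_num [s6pow, map_ofNat, Fin.ext_iff, show ((3:Fin 5):ℕ)=3 from rfl, show ((4:Fin 5):ℕ)=4 from rfl, Fin.isValue] <;> ring_nf <;> norm_num [s6sq, s6pow, map_ofNat] <;> ring_nf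

lemma hRR' : R * Rᴴ = 1 := by
  ext i j
  fin_cases i <;> fin_cases j <;>
    simp only [R, Matrix.mul_apply, Fin.sum_univ_five, Matrix.conjTranspose_apply,
      Matrix.smul_apply, Matrix.cons_val', Matrix.cons_val_zero, Matrix.cons_val_one,
      Matrix.head_cons, Matrix.head_fin_const, Matrix.empty_val', Matrix.cons_val_fin_one,
      Matrix.of_apply, Matrix.cons_val_two, Matrix.cons_val_three, Matrix.cons_val_four, Matrix.cons_val,
      Matrix.one_apply, Function.comp,
      star_mul', map_neg, _root_.map_mul, _root_.map_one, Complex.conj_ofNat, smul_eq_mul,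
      Complex.star_def, Complex.conj_I, Complex.conj_ofReal, map_div₀] <;>
    norm_num [s6pow, map_ofNat, Fin.ext_iff, show ((3:Fin 5):ℕ)=3 from rfl, show ((4:Fin 5):ℕ)=4 from rfl, Fin.isValue] <;> ring_nf <;> norm_num [s6sq, s6pow, map_ofNat] <;> ring_nf

lemma hSyR : Sy * R = R * Sz := by
  rw [Sy_eq]
  ext i j
  fin_cases i <;> fin_cases j <;>
    simp only [sy, R, Sz, Matrix.mul_apply, Fin.sum_univ_five, Matrix.diagonal_apply,
      Matrix.smul_apply, Matrix.cons_val', Matrix.cons_val_zero, Matrix.cons_val_one,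
      Matrix.head_cons, Matrix.head_fin_const, Matrix.empty_val', Matrix.cons_val_fin_one,
      Matrix.of_apply, Matrix.cons_val_two, Matrix.cons_val_three, Matrix.cons_val_four, Matrix.cons_val,
      Function.comp, smul_eq_mul] <;>
    norm_num [Fin.ext_iff, show ((3:Fin 5):ℕ)=3 from rfl, show ((4:Fin 5):ℕ)=4 from rfl] <;>
    ring_nf <;> norm_num [s6sq, s6pow] <;> ring_nf

noncomputable def D5 : Matrix (Fin 5) (Fin 5) ℂ := Matrix.diagonal ![1,-1,1,-1,1]

noncomputable def E5 : Matrix (Fin 5) (Fin 5) ℂ :=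
  !![0,0,0,0,1; 0,0,0,-1,0; 0,0,1,0,0; 0,-1,0,0,0; 1,0,0,0,0]

lemma hRDR : R * D5 * Rᴴ = E5 := by
  ext i j
  fin_cases i <;> fin_cases j <;>
    simp only [R, D5, E5, Matrix.mul_apply, Fin.sum_univ_five, Matrix.conjTranspose_apply,
      Matrix.diagonal_apply, Matrix.smul_apply, Matrix.cons_val', Matrix.cons_val_zero,
      Matrix.cons_val_one, Matrix.head_cons, Matrix.head_fin_const, Matrix.empty_val',
      Matrix.cons_val_fin_one, Matrix.of_apply, Matrix.cons_val_two, Matrix.cons_val_three,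
      Matrix.cons_val_four, Matrix.cons_val, Function.comp,
      star_mul', map_neg, _root_.map_mul, _root_.map_one, Complex.conj_ofNat, smul_eq_mul,
      Complex.star_def, Complex.conj_I, Complex.conj_ofReal, map_div₀] <;>
    norm_num [s6pow, map_ofNat, Fin.ext_iff, show ((3:Fin 5):ℕ)=3 from rfl, show ((4:Fin 5):ℕ)=4 from rfl, Fin.isValue] <;> ring_nf <;> norm_num [s6sq, s6pow, map_ofNat] <;> ring_nf

noncomputable def Runit : (Matrix (Fin 5) (Fin 5) ℂ)ˣ := ⟨R, Rᴴ, hRR', hRR⟩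

lemma exp_smul_Sy (c : ℂ) :
    NormedSpace.exp (c • Sy) = R * NormedSpace.exp (c • Sz) * Rᴴ := by
  have h1 : Sy = R * Sz * Rᴴ := by
    calc Sy = Sy * (R * Rᴴ) := by rw [hRR', mul_one]
    _ = (Sy * R) * Rᴴ := by rw [Matrix.mul_assoc]
    _ = R * Sz * Rᴴ := by rw [hSyR]
  have h2 : c • Sy = Runit * (c • Sz) * (Runit⁻¹ : (Matrix (Fin 5) (Fin 5) ℂ)ˣ) := by
    show c • Sy = R * (c • Sz) * Rᴴ
    rw [h1, Matrix.mul_smul, Matrix.smul_mul]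
  rw [h2, Matrix.exp_units_conj]
  rfl

lemma exp_smul_Sz (c : ℂ) :
    NormedSpace.exp (c • Sz) =
      Matrix.diagonal (fun i : Fin 5 => Complex.exp (c * ((2:ℂ) - (i:ℕ)))) := by
  have h : c • Sz = Matrix.diagonal (fun i : Fin 5 => c * ((2:ℂ) - (i:ℕ))) := by
    rw [Sz, ← Matrix.diagonal_smul]
    congr 1
  rw [h, Matrix.exp_diagonal, Pi.exp_def]
  congr 1
  funext i
  rw [← Complex.exp_eq_exp_ℂ]

lemma cexp_int_pi (n : ℤ) : Complex.exp ((n:ℂ) * (Real.pi:ℂ) * Complex.I) = (-1)^n := by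
  rw [show ((n:ℂ) * (Real.pi:ℂ) * Complex.I) = ((n:ℤ) : ℂ) * ((Real.pi:ℂ) * Complex.I) by
      push_cast; ring,
    Complex.exp_int_mul, Complex.exp_pi_mul_I]

lemma hfun : (fun i : Fin 5 =>
      Complex.exp (-Complex.I * (Real.pi:ℂ) * ((1:ℝ):ℂ) * ((2:ℂ) - ((i:ℕ):ℂ))))
    = ![1,-1,1,-1,1] := by
  funext i
  rw [show -Complex.I * (Real.pi:ℂ) * ((1:ℝ):ℂ) * ((2:ℂ) - ((i:ℕ):ℂ))
      = ((((i:ℕ):ℤ) - 2 : ℤ) : ℂ) * (Real.pi:ℂ) * Complex.I from by push_cast; ring,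
    cexp_int_pi]
  fin_cases i <;> norm_num [Matrix.vecHead, Matrix.vecTail]

lemma Ut_one : Ut 1 = E5 := by
  rw [Ut, exp_smul_Sy, exp_smul_Sz, hfun, ← hRDR, D5]

lemma Q_eq : Q = !![0, 1; 1, 0] := by
  ext i j
  fin_cases i <;> fin_cases j <;>
    simp only [Q, ψ, Ut_one, E5, ψ1, ψ2, Matrix.of_apply, dotProduct, Matrix.mulVec,
      Fin.sum_univ_five, Pi.star_apply, Matrix.cons_val', Matrix.cons_val_zero,
      Matrix.cons_val_one, Matrix.head_cons, Matrix.empty_val', Matrix.cons_val_fin_one,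
      Matrix.cons_val_two, Matrix.cons_val_three, Matrix.cons_val_four, Matrix.cons_val,
      Function.comp, Complex.star_def, map_neg, _root_.map_mul,
      Complex.conj_ofReal, _root_.map_one, map_inv₀] <;>
    ring_nf <;>
    norm_num [s2sq, s3sq, s2pow, s3pow, Matrix.cons_val] <;>
    ring_nf <;>
    norm_num [s2sq, s3sq, s2pow, s3pow]

/-- For the closed curve Π(t) = exp(-iπt S_y)(Π_NOT), the Wilczek–Zee connection
A_{ij}(t) = ⟨φ_i(t)|φ̇_j(t)⟩ vanishes (so F = Id), the overlap matrix Q is unitary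
(so its polar part is itself), and the holonomy U_geo = P F⁻¹ = Q equals the
NOT gate σ_x up to a global phase. -/
theorem toponomic_NOT :
    (∀ (t : ℝ) (i j : Fin 2),
        star (Ut t *ᵥ ψ i) ⬝ᵥ
          ((((-Complex.I * (Real.pi : ℂ)) • Sy) * Ut t) *ᵥ ψ j) = 0) ∧
    Q ∈ Matrix.unitaryGroup (Fin 2) ℂ ∧
    ∃ c : ℂ, ‖c‖ = 1 ∧ Q = c • !![0, 1; 1, 0] := by
  refine ⟨?_, ?_, 1, by norm_num, by rw [Q_eq, one_smul]⟩
  case refine_2 =>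
    rw [Matrix.mem_unitaryGroup_iff, Q_eq]
    ext i j
    fin_cases i <;> fin_cases j <;>
      simp [Matrix.mul_apply, Fin.sum_univ_two, Matrix.one_apply, Matrix.star_apply,
        Matrix.vecHead, Matrix.vecTail]
  · intro t i j
    set s : ℂ := -Complex.I * (Real.pi : ℂ) * (t : ℂ) with hs
    have hUt : Ut t = NormedSpace.exp (s • Sy) := rfl
    have hcomm : Commute (((-Complex.I * (Real.pi : ℂ)) • Sy)) (Ut t) := by
      rw [hUt]
      exact (((Commute.refl Sy).smul_left _).smul_right _).exp_right
    have hUtH : (Ut t)ᴴ = NormedSpace.exp ((starRingEnd ℂ s) • Sy) := by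
      rw [hUt, ← Matrix.exp_conjTranspose, Matrix.conjTranspose_smul, SyH]
      rfl
    have hUU : (Ut t)ᴴ * Ut t = 1 := by
      have hc : Commute ((starRingEnd ℂ s) • Sy) (s • Sy) :=
        ((Commute.refl Sy).smul_left _).smul_right _
      rw [hUtH, hUt, ← Matrix.exp_add_of_commute _ _ hc, ← add_smul]
      have : (starRingEnd ℂ) s + s = 0 := by
        rw [hs]
        simp [_root_.map_mul, Complex.conj_I, Complex.conj_ofReal] <;> ring_nf
      rw [this, zero_smul, NormedSpace.exp_zero]
    have key : (Ut t)ᴴ * ((((-Complex.I * (Real.pi : ℂ)) • Sy) * Ut t)) =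
        ((-Complex.I * (Real.pi : ℂ)) • Sy) := by
      rw [hcomm.eq, ← Matrix.mul_assoc, hUU, one_mul]
    rw [Matrix.star_mulVec, ← Matrix.dotProduct_mulVec, Matrix.mulVec_mulVec, key]
    rw [Matrix.smul_mulVec, dotProduct_smul]
    have hzero : star (ψ i) ⬝ᵥ (Sy *ᵥ ψ j) = 0 := by
      rw [Sy_eq]
      fin_cases i <;> fin_cases j <;>
        simp only [sy, ψ, ψ1, ψ2, dotProduct, Matrix.mulVec, Fin.sum_univ_five,
          Pi.star_apply, Matrix.cons_val', Matrix.cons_val_zero, Matrix.cons_val_one,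
          Matrix.head_cons, Matrix.empty_val', Matrix.cons_val_fin_one, Matrix.cons_val_two,
          Matrix.cons_val_three, Matrix.cons_val_four, Matrix.cons_val,
          Function.comp, Complex.star_def, map_neg, _root_.map_mul, Complex.conj_ofReal,
          _root_.map_one, map_inv₀] <;>
        ring_nf <;>
        norm_num [s2sq, s3sq] <;> ring_nf <;> norm_num <;>
        simp [Matrix.vecHead, Matrix.vecTail] <;> ring
    rw [hzero]
    simp
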